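/- The map ι sending a finite partial function p (given as disjoint finite sets p.ins, p.out ⊆ ℵ₂ × ℕ) to the set of all subsets S of ℵ₂ × ℕ with p.ins ⊆ S and p.out ∩ S = ∅ has image a dense suborder of the regular open algebra RO(2^(ℵ₂ × ℕ)): every ι(p) is a nonempty clopen (hence regular open) set, and every nonzero regular open set contains some ι(p). -/

import Mathlib

open Cardinal

/-- A set is regular open if it equals the interior of its closure. -/
def IsRegularOpen {X : Type*} [TopologicalSpace X] (U : Set X) : Prop :=
  interior (closure U) = U

/-- The underlying type of `ℵ₂`. -/
noncomputable abbrev Aleph2 : Type 1 := (aleph 2).ord.ToType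

/-- The Cohen forcing space `2^(ℵ₂ × ℕ)` with the product topology (`2` discrete). -/
abbrev CohenSpace : Type 1 := Aleph2 × ℕ → Bool

/-- The Cohen poset: finite partial functions `ℵ₂ × ℕ → 2`, represented as a
disjoint pair of finite sets (the preimages of `1` and `0`). -/
structure CohenPoset : Type 1 where
  ins : Finset (Aleph2 × ℕ)
  out : Finset (Aleph2 × ℕ)
  H : ins ∩ out = ∅

/-- The canonical embedding of the Cohen poset into the Cohen space: `p` is sent to
the set of all subsets of `ℵ₂ × ℕ` containing `p.ins` and disjoint from `p.out`. -/
def iota (p : CohenPoset) : Set CohenSpace :=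
  {S | (∀ a ∈ p.ins, S a = true) ∧ ∀ a ∈ p.out, S a = false}

/-- The image of the Cohen poset under `ι` is a dense suborder of the regular open
algebra of `2^(ℵ₂ × ℕ)`: each `ι p` is a nonempty clopen (hence regular open) set,
and every nonzero regular open set contains some `ι p`. -/
lemma iota_eq (p : CohenPoset) :
    iota p = (⋂ a ∈ p.ins, {S : CohenSpace | S a = true}) ∩
      (⋂ a ∈ p.out, {S : CohenSpace | S a = false}) := by
  ext S; simp [iota, Set.mem_iInter]

lemma iota_nonempty (p : CohenPoset) : (iota p).Nonempty := by
  refine ⟨fun a => decide (a ∈ p.ins), ?_, ?_⟩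
  · intro a ha; simp [ha]
  · intro a ha
    have : a ∉ p.ins := by
      intro h
      have := p.H
      have : a ∈ p.ins ∩ p.out := Finset.mem_inter.2 ⟨h, ha⟩
      simp_all
    simp [this]

lemma iota_clopen (p : CohenPoset) : IsClopen (iota p) := by
  rw [iota_eq]
  have h1 : ∀ (b : Bool) (a : Aleph2 × ℕ), IsClopen {S : CohenSpace | S a = b} := by
    intro b a
    exact (isClopen_discrete {b}).preimage (continuous_apply a)
  refine IsClopen.inter ?_ ?_ <;>
    exact Set.Finite.isClopen_biInter (Finset.finite_toSet _) (fun a _ => h1 _ a)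

lemma iota_regularOpen (p : CohenPoset) : IsRegularOpen (iota p) := by
  have h := iota_clopen p
  unfold IsRegularOpen
  rw [h.isClosed.closure_eq, h.isOpen.interior_eq]

theorem cohen_poset_dense :
    (∀ p : CohenPoset, (iota p).Nonempty) ∧
    (∀ p : CohenPoset, IsClopen (iota p)) ∧
    (∀ p : CohenPoset, IsRegularOpen (iota p)) ∧
    (∀ U : Set CohenSpace, IsRegularOpen U → U.Nonempty →
      ∃ p : CohenPoset, iota p ⊆ U) := by
  refine ⟨iota_nonempty, iota_clopen, iota_regularOpen, ?_⟩
  intro U hU hne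
  have hopen : IsOpen U := by rw [← hU]; exact isOpen_interior
  obtain ⟨x, hx⟩ := hne
  rw [isOpen_pi_iff] at hopen
  obtain ⟨I, u, hu, hsub⟩ := hopen x hx
  refine ⟨⟨I.filter (fun a => x a = true), I.filter (fun a => x a = false), ?_⟩, ?_⟩
  · ext a; simp only [Finset.mem_inter, Finset.mem_filter, Finset.notMem_empty, iff_false]
    rintro ⟨⟨-, h1⟩, -, h2⟩; simp [h1] at h2
  · intro S hS
    apply hsub
    intro a ha
    have : S a = x a := by
      rcases hS with ⟨h1, h2⟩
      cases hb : x a with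
      | true => exact h1 a (Finset.mem_filter.2 ⟨ha, hb⟩)
      | false => exact h2 a (Finset.mem_filter.2 ⟨ha, hb⟩)
    rw [this]
    exact (hu a ha).2
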